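/- For a, b, c real constants with a(x²+y²) + 1 > 0 and c + bz + az² > 0, the function u(x,y,z) = log(4(c + bz + az²)) − 2 log(1 + a(x² + y²)) satisfies the SU(∞) Toda field equation u_xx + u_yy + (e^u)_zz = 0. -/

import Mathlib

/-- `u(x,y,z) = log(4(c + bz + az²)) − 2 log(1 + a(x² + y²))`. -/
noncomputable def uToda (a b c x y z : ℝ) : ℝ :=
  Real.log (4 * (c + b * z + a * z ^ 2)) - 2 * Real.log (1 + a * (x ^ 2 + y ^ 2))

lemma uToda_hasDerivAt_x (a b c y z : ℝ) (t : ℝ) (ht : 0 < 1 + a * (t ^ 2 + y ^ 2)) :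
    HasDerivAt (fun x' => uToda a b c x' y z)
      (-(4 * a * t) / (1 + a * (t ^ 2 + y ^ 2))) t := by
  have hinner : HasDerivAt (fun x' : ℝ => 1 + a * (x' ^ 2 + y ^ 2)) (a * (2 * t)) t := by
    have h1 : HasDerivAt (fun x' : ℝ => x' ^ 2 + y ^ 2) (2 * t) t := by
      simpa using ((hasDerivAt_pow 2 t).add_const (y ^ 2))
    simpa using (h1.const_mul a).const_add 1
  have hlog := (Real.hasDerivAt_log (ne_of_gt ht)).comp t hinner
  have h := (hlog.const_mul 2).const_sub (Real.log (4 * (c + b * z + a * z ^ 2)))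
  refine h.congr_deriv ?_
  rw [eq_div_iff (ne_of_gt ht)]
  field_simp
  ring

/-- the function `u` above satisfies the SU(∞) Toda field equation
`u_xx + u_yy + (e^u)_zz = 0` wherever `1 + a(x²+y²) > 0` and `c + bz + az² > 0`. -/
theorem stmt7 (a b c x y z : ℝ)
    (h1 : 0 < 1 + a * (x ^ 2 + y ^ 2)) (h2 : 0 < c + b * z + a * z ^ 2) :
    deriv (deriv (fun x' => uToda a b c x' y z)) x
      + deriv (deriv (fun y' => uToda a b c x y' z)) y
      + deriv (deriv (fun z' => Real.exp (uToda a b c x y z'))) z = 0 := by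
  have hKne : (1 + a * (x ^ 2 + y ^ 2)) ≠ 0 := ne_of_gt h1
  -- x part
  have hXopen : IsOpen {t : ℝ | 0 < 1 + a * (t ^ 2 + y ^ 2)} :=
    isOpen_lt continuous_const (by continuity)
  have hXe : deriv (fun x' => uToda a b c x' y z)
      =ᶠ[nhds x] fun t => -(4 * a * t) / (1 + a * (t ^ 2 + y ^ 2)) := by
    filter_upwards [hXopen.mem_nhds h1] with t ht
    exact (uToda_hasDerivAt_x a b c y z t ht).deriv
  have hX2 : HasDerivAt (fun t : ℝ => -(4 * a * t) / (1 + a * (t ^ 2 + y ^ 2)))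
      ((-(4 * a) * (1 + a * (x ^ 2 + y ^ 2)) - -(4 * a * x) * (a * (2 * x)))
        / (1 + a * (x ^ 2 + y ^ 2)) ^ 2) x := by
    have hnum : HasDerivAt (fun t : ℝ => -(4 * a * t)) (-(4 * a)) x := by
      simpa [Pi.neg_def] using ((hasDerivAt_id x).const_mul (4 * a)).neg
    have hden : HasDerivAt (fun t : ℝ => 1 + a * (t ^ 2 + y ^ 2)) (a * (2 * x)) x := by
      have h1' : HasDerivAt (fun t : ℝ => t ^ 2 + y ^ 2) (2 * x) x := by
        simpa using ((hasDerivAt_pow 2 x).add_const (y ^ 2))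
      simpa using (h1'.const_mul a).const_add 1
    exact hnum.div hden hKne
  have hXval : deriv (deriv (fun x' => uToda a b c x' y z)) x
      = (-(4 * a) * (1 + a * (x ^ 2 + y ^ 2)) - -(4 * a * x) * (a * (2 * x)))
        / (1 + a * (x ^ 2 + y ^ 2)) ^ 2 := by
    rw [hXe.deriv_eq]; exact hX2.deriv
  -- y part (uToda is symmetric in x and y)
  have hsymm : ∀ y' : ℝ, uToda a b c x y' z = uToda a b c y' x z := by
    intro y'; unfold uToda; ring_nf
  have h1' : 0 < 1 + a * (y ^ 2 + x ^ 2) := by linarith [h1]; 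
  have hYopen : IsOpen {t : ℝ | 0 < 1 + a * (t ^ 2 + x ^ 2)} :=
    isOpen_lt continuous_const (by continuity)
  have hYe : deriv (fun y' => uToda a b c x y' z)
      =ᶠ[nhds y] fun t => -(4 * a * t) / (1 + a * (t ^ 2 + x ^ 2)) := by
    filter_upwards [hYopen.mem_nhds h1'] with t ht
    have : (fun y' => uToda a b c x y' z) = (fun y' => uToda a b c y' x z) := by
      funext y'; exact hsymm y'
    rw [this]
    exact (uToda_hasDerivAt_x a b c x z t ht).deriv
  have hY2 : HasDerivAt (fun t : ℝ => -(4 * a * t) / (1 + a * (t ^ 2 + x ^ 2)))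
      ((-(4 * a) * (1 + a * (y ^ 2 + x ^ 2)) - -(4 * a * y) * (a * (2 * y)))
        / (1 + a * (y ^ 2 + x ^ 2)) ^ 2) y := by
    have hnum : HasDerivAt (fun t : ℝ => -(4 * a * t)) (-(4 * a)) y := by
      simpa [Pi.neg_def] using ((hasDerivAt_id y).const_mul (4 * a)).neg
    have hden : HasDerivAt (fun t : ℝ => 1 + a * (t ^ 2 + x ^ 2)) (a * (2 * y)) y := by
      have hh : HasDerivAt (fun t : ℝ => t ^ 2 + x ^ 2) (2 * y) y := by
        simpa using ((hasDerivAt_pow 2 y).add_const (x ^ 2))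
      simpa using (hh.const_mul a).const_add 1
    exact hnum.div hden (ne_of_gt h1')
  have hYval : deriv (deriv (fun y' => uToda a b c x y' z)) y
      = (-(4 * a) * (1 + a * (y ^ 2 + x ^ 2)) - -(4 * a * y) * (a * (2 * y)))
        / (1 + a * (y ^ 2 + x ^ 2)) ^ 2 := by
    rw [hYe.deriv_eq]; exact hY2.deriv
  -- z part
  have hZopen : IsOpen {t : ℝ | 0 < c + b * t + a * t ^ 2} :=
    isOpen_lt continuous_const (by continuity)
  have hZe : (fun z' => Real.exp (uToda a b c x y z'))
      =ᶠ[nhds z] fun z' => (4 * (c + b * z' + a * z' ^ 2)) / (1 + a * (x ^ 2 + y ^ 2)) ^ 2 := by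
    filter_upwards [hZopen.mem_nhds h2] with t ht
    unfold uToda
    rw [Real.exp_sub, Real.exp_log (by positivity)]
    congr 1
    rw [show (2 : ℝ) * Real.log (1 + a * (x ^ 2 + y ^ 2))
        = Real.log ((1 + a * (x ^ 2 + y ^ 2)) ^ 2) by
      rw [Real.log_pow]; push_cast; ring]
    exact Real.exp_log (by positivity)
  have hZd1 : ∀ t : ℝ, HasDerivAt
      (fun z' => (4 * (c + b * z' + a * z' ^ 2)) / (1 + a * (x ^ 2 + y ^ 2)) ^ 2)
      ((4 * (b + a * (2 * t))) / (1 + a * (x ^ 2 + y ^ 2)) ^ 2) t := by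
    intro t
    have hp : HasDerivAt (fun z' : ℝ => c + b * z' + a * z' ^ 2) (b + a * (2 * t)) t := by
      have hb : HasDerivAt (fun z' : ℝ => c + b * z') b t := by
        simpa using ((hasDerivAt_id t).const_mul b).const_add c
      have ha : HasDerivAt (fun z' : ℝ => a * z' ^ 2) (a * (2 * t)) t := by
        simpa using (hasDerivAt_pow 2 t).const_mul a
      simpa [Pi.add_def] using hb.add ha
    simpa [mul_comm, mul_div_assoc] using ((hp.const_mul 4).div_const ((1 + a * (x ^ 2 + y ^ 2)) ^ 2))
  have hZe1 : deriv (fun z' => Real.exp (uToda a b c x y z'))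
      =ᶠ[nhds z] fun t => (4 * (b + a * (2 * t))) / (1 + a * (x ^ 2 + y ^ 2)) ^ 2 := by
    filter_upwards [hZe.deriv] with t ht
    rw [ht, (hZd1 t).deriv]
  have hZ2 : HasDerivAt (fun t : ℝ => (4 * (b + a * (2 * t))) / (1 + a * (x ^ 2 + y ^ 2)) ^ 2)
      ((4 * (a * 2)) / (1 + a * (x ^ 2 + y ^ 2)) ^ 2) z := by
    have hp : HasDerivAt (fun t : ℝ => 4 * (b + a * (2 * t))) (4 * (a * 2)) z := by
      have : HasDerivAt (fun t : ℝ => b + a * (2 * t)) (a * 2) z := by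
        simpa [mul_assoc] using (((hasDerivAt_id z).const_mul (a * 2)).const_add b)
      simpa using this.const_mul 4
    exact hp.div_const _
  have hZval : deriv (deriv (fun z' => Real.exp (uToda a b c x y z'))) z
      = (4 * (a * 2)) / (1 + a * (x ^ 2 + y ^ 2)) ^ 2 := by
    rw [hZe1.deriv_eq]; exact hZ2.deriv
  rw [hXval, hYval, hZval]
  have hK2 : ((1 + a * (x ^ 2 + y ^ 2)) ^ 2) ≠ 0 := by positivity
  have hK2' : ((1 + a * (y ^ 2 + x ^ 2)) ^ 2) ≠ 0 := by
    have : (1 + a * (y ^ 2 + x ^ 2)) = (1 + a * (x ^ 2 + y ^ 2)) := by ring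
    rw [this]; exact hK2
  field_simp
  ring
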